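/- Let δ(x) be the piecewise constant bump function equal to δ₀+ε₀ on [−d₀/2, d₀/2] and δ₀ elsewhere, with D > 0. Then the function Δ₀(x) defined piecewise by Δ₀(x) = δ₀ + (ε₀/2)(e^{d₀/(2√D)} − e^{−d₀/(2√D)})e^{x/√D} for x ≤ −d₀/2, Δ₀(x) = δ₀ + ε₀ − (ε₀/2)e^{−d₀/(2√D)}(e^{x/√D} + e^{−x/√D}) for −d₀/2 < x ≤ d₀/2, and Δ₀(x) = δ₀ + (ε₀/2)(e^{d₀/(2√D)} − e^{−d₀/(2√D)})e^{−x/√D} for x ≥ d₀/2, is a bounded C¹ function satisfying D·Δ₀''(x) − Δ₀(x) + δ(x) = 0 on each of the three open intervals, and Δ₀ and Δ₀' are continuous at x = ±d₀/2. -/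

import Mathlib

open Real Filter Set

/-- The piecewise constant bump heterogeneity. -/
noncomputable def bumpDelta (δ₀ ε₀ d₀ : ℝ) : ℝ → ℝ :=
  fun x => if -d₀ / 2 ≤ x ∧ x ≤ d₀ / 2 then δ₀ + ε₀ else δ₀

/-- The explicit piecewise solution Δ₀ of D·Δ₀'' − Δ₀ + δ(x) = 0. -/
noncomputable def bumpSol (D δ₀ ε₀ d₀ : ℝ) : ℝ → ℝ := fun x =>
  if x ≤ -d₀ / 2 then
    δ₀ + ε₀ / 2 * (Real.exp (d₀ / (2 * Real.sqrt D)) - Real.exp (-d₀ / (2 * Real.sqrt D)))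
      * Real.exp (x / Real.sqrt D)
  else if x ≤ d₀ / 2 then
    δ₀ + ε₀ - ε₀ / 2 * Real.exp (-d₀ / (2 * Real.sqrt D))
      * (Real.exp (x / Real.sqrt D) + Real.exp (-x / Real.sqrt D))
  else
    δ₀ + ε₀ / 2 * (Real.exp (d₀ / (2 * Real.sqrt D)) - Real.exp (-d₀ / (2 * Real.sqrt D)))
      * Real.exp (-x / Real.sqrt D)

/-- One-junction glue function: `2 - e^{t/s}` for `t ≤ 0`, `e^{-t/s}` for `t ≥ 0`. -/
noncomputable def glueFn (s : ℝ) : ℝ → ℝ :=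
  fun t => if t ≤ 0 then 2 - Real.exp (t / s) else Real.exp (-t / s)

lemma expDiv_hasDerivAt (s y : ℝ) :
    HasDerivAt (fun u : ℝ => Real.exp (u / s)) (Real.exp (y / s) * (1 / s)) y := by
  simpa [Function.comp_def] using
    (Real.hasDerivAt_exp (y / s)).comp y ((hasDerivAt_id y).div_const s)

lemma expNegDiv_hasDerivAt (s y : ℝ) :
    HasDerivAt (fun u : ℝ => Real.exp (-u / s)) (Real.exp (-y / s) * (-1 / s)) y := by
  simpa [Function.comp_def] using
    (Real.hasDerivAt_exp (-y / s)).comp y (((hasDerivAt_id y).neg).div_const s)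

lemma glueFn_hasDerivAt (s : ℝ) (t : ℝ) :
    HasDerivAt (glueFn s) (-(1 / s) * Real.exp (-|t| / s)) t := by
  rcases lt_trichotomy t 0 with h | rfl | h
  · have hev : glueFn s =ᶠ[nhds t] fun u => 2 - Real.exp (u / s) := by
      filter_upwards [Iio_mem_nhds h] with u hu
      have hu' : u < 0 := hu
      simp [glueFn, hu'.le]
    have hd : HasDerivAt (fun u => 2 - Real.exp (u / s)) (-(1 / s) * Real.exp (-|t| / s)) t := by
      have := (expDiv_hasDerivAt s t).const_sub 2
      refine this.congr_deriv ?_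
      rw [abs_of_neg h]; ring_nf
    exact hd.congr_of_eventuallyEq hev
  · have h1 : HasDerivWithinAt (glueFn s) (-(1 / s)) (Iic 0) 0 := by
      have hd := ((expDiv_hasDerivAt s 0).const_sub 2).hasDerivWithinAt (s := Iic (0 : ℝ))
      have hc : HasDerivWithinAt (glueFn s) (-(Real.exp (0 / s) * (1 / s))) (Iic 0) 0 := by
        refine hd.congr (fun u hu => ?_) ?_
        · simp [glueFn, (mem_Iic.mp hu)]
        · simp [glueFn]
      convert hc using 1
      simp
    have h2 : HasDerivWithinAt (glueFn s) (-(1 / s)) (Ici 0) 0 := by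
      have hd := (expNegDiv_hasDerivAt s 0).hasDerivWithinAt (s := Ici (0 : ℝ))
      have hc : HasDerivWithinAt (glueFn s) (Real.exp (-0 / s) * (-1 / s)) (Ici 0) 0 := by
        refine hd.congr (fun u hu => ?_) ?_
        · by_cases hu0 : u ≤ 0
          · have : u = 0 := le_antisymm hu0 (mem_Ici.mp hu)
            subst this; norm_num [glueFn]
          · simp [glueFn, hu0]
        · norm_num [glueFn]
      convert hc using 1
      simp; ring
    have h3 := h1.union h2
    rw [Iic_union_Ici, hasDerivWithinAt_univ] at h3
    refine h3.congr_deriv ?_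
    simp
  · have hev : glueFn s =ᶠ[nhds t] fun u => Real.exp (-u / s) := by
      filter_upwards [Ioi_mem_nhds h] with u hu
      simp [glueFn, not_le.mpr (mem_Ioi.mp hu)]
    have hd : HasDerivAt (fun u => Real.exp (-u / s)) (-(1 / s) * Real.exp (-|t| / s)) t := by
      have := expNegDiv_hasDerivAt s t
      convert this using 1
      rw [abs_of_pos h]; ring
    exact hd.congr_of_eventuallyEq hev

lemma glueFn_contDiff (s : ℝ) : ContDiff ℝ 1 (glueFn s) := by
  rw [contDiff_one_iff_deriv]
  constructor
  · exact fun t => (glueFn_hasDerivAt s t).differentiableAt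
  · have hder : deriv (glueFn s) = fun t => -(1 / s) * Real.exp (-|t| / s) :=
      funext fun t => (glueFn_hasDerivAt s t).deriv
    rw [hder]
    exact continuous_const.mul (Real.continuous_exp.comp ((continuous_abs.neg).div_const s))

lemma glueFn_bound (s : ℝ) (hs : 0 < s) (t : ℝ) : |glueFn s t - 1| ≤ 1 := by
  unfold glueFn
  split_ifs with h
  · have h1 : Real.exp (t / s) > 0 := Real.exp_pos _
    have h2 : Real.exp (t / s) ≤ 1 := by
      rw [Real.exp_le_one_iff]
      exact div_nonpos_iff.mpr (Or.inr ⟨h, hs.le⟩)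
    rw [abs_le]; constructor <;> nlinarith
  · have h1 : Real.exp (-t / s) > 0 := Real.exp_pos _
    have h2 : Real.exp (-t / s) ≤ 1 := by
      rw [Real.exp_le_one_iff]
      refine div_nonpos_iff.mpr (Or.inr ⟨by linarith, hs.le⟩)
    rw [abs_le]; constructor <;> nlinarith

lemma bumpSol_eq_glue (D δ₀ ε₀ d₀ : ℝ) (hD : 0 < D) (hd : 0 < d₀) :
    bumpSol D δ₀ ε₀ d₀ = fun x => δ₀ + ε₀ / 2 *
      (glueFn (Real.sqrt D) (x - d₀ / 2) + glueFn (Real.sqrt D) (-x - d₀ / 2) - 2) := by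
  have hs : 0 < Real.sqrt D := Real.sqrt_pos.mpr hD
  have hsne : Real.sqrt D ≠ 0 := ne_of_gt hs
  funext x
  unfold bumpSol glueFn
  set s := Real.sqrt D with hsdef
  split_ifs with h1 h2 h3 h4 h5 h6 h7 <;> try (exfalso; linarith)
  · -- x ≤ -d₀/2, x - d₀/2 ≤ 0, -x - d₀/2 ≤ 0 (so x = -d₀/2)
    have hx : x = -d₀ / 2 := by linarith
    subst hx
    have r1 : (-d₀ / 2 - d₀ / 2) / s = -d₀ / (2 * s) + -d₀ / (2 * s) := by ring
    have r2 : (-(-d₀ / 2) - d₀ / 2) / s = (0 : ℝ) := by ring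
    have r3 : (-d₀ / 2 : ℝ) / s = -d₀ / (2 * s) := by ring
    have hmul : Real.exp (d₀ / (2 * s)) * Real.exp (-d₀ / (2 * s)) = 1 := by
      rw [← Real.exp_add, show d₀ / (2 * s) + -d₀ / (2 * s) = 0 by ring, Real.exp_zero]
    rw [r1, Real.exp_add, r2, Real.exp_zero, r3]
    linear_combination (ε₀ / 2) * hmul
  · -- x ≤ -d₀/2, x - d₀/2 ≤ 0, ¬(-x - d₀/2 ≤ 0)
    have r1 : (x - d₀ / 2) / s = x / s + -d₀ / (2 * s) := by ring
    have r2 : (-(-x - d₀ / 2)) / s = x / s + d₀ / (2 * s) := by ring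
    rw [r1, Real.exp_add, r2, Real.exp_add]
    ring
  · -- middle: ¬(x ≤ -d₀/2), x ≤ d₀/2, x - d₀/2 ≤ 0, -x - d₀/2 ≤ 0
    have r1 : (x - d₀ / 2) / s = x / s + -d₀ / (2 * s) := by ring
    have r2 : (-x - d₀ / 2) / s = -x / s + -d₀ / (2 * s) := by ring
    rw [r1, Real.exp_add, r2, Real.exp_add]
    ring
  · -- right: ¬(x ≤ -d₀/2), ¬(x ≤ d₀/2), ¬(x - d₀/2 ≤ 0), -x - d₀/2 ≤ 0
    have r1 : (-(x - d₀ / 2)) / s = -x / s + d₀ / (2 * s) := by ring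
    have r2 : (-x - d₀ / 2) / s = -x / s + -d₀ / (2 * s) := by ring
    rw [r1, Real.exp_add, r2, Real.exp_add]
    ring

/-- Δ₀ is a bounded C¹ function satisfying D·Δ₀'' − Δ₀ + δ(x) = 0 on each of the
three open intervals determined by x = ±d₀/2. -/
theorem stmt8 (D δ₀ ε₀ d₀ : ℝ) (hD : 0 < D) (hd : 0 < d₀) :
    ContDiff ℝ 1 (bumpSol D δ₀ ε₀ d₀) ∧
    (∃ C : ℝ, ∀ x : ℝ, |bumpSol D δ₀ ε₀ d₀ x| ≤ C) ∧
    (∀ x : ℝ, (x < -d₀ / 2 ∨ (-d₀ / 2 < x ∧ x < d₀ / 2) ∨ d₀ / 2 < x) →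
      D * deriv (deriv (bumpSol D δ₀ ε₀ d₀)) x - bumpSol D δ₀ ε₀ d₀ x
        + bumpDelta δ₀ ε₀ d₀ x = 0) := by
  have hs : 0 < Real.sqrt D := Real.sqrt_pos.mpr hD
  set s := Real.sqrt D with hsdef
  have hsne : s ≠ 0 := ne_of_gt hs
  have hs2 : s * s = D := Real.mul_self_sqrt hD.le
  have hglue := bumpSol_eq_glue D δ₀ ε₀ d₀ hD hd
  rw [← hsdef] at hglue
  refine ⟨?_, ?_, ?_⟩
  · -- C¹
    rw [hglue]
    have hg := glueFn_contDiff s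
    have h1 : ContDiff ℝ 1 (fun x : ℝ => glueFn s (x - d₀ / 2)) :=
      hg.comp (contDiff_id.sub contDiff_const)
    have h2 : ContDiff ℝ 1 (fun x : ℝ => glueFn s (-x - d₀ / 2)) :=
      hg.comp (contDiff_id.neg.sub contDiff_const)
    exact contDiff_const.add (contDiff_const.mul ((h1.add h2).sub contDiff_const))
  · -- bounded
    refine ⟨|δ₀| + |ε₀|, fun x => ?_⟩
    rw [hglue]
    have b1 := glueFn_bound s hs (x - d₀ / 2)
    have b2 := glueFn_bound s hs (-x - d₀ / 2)
    have e : δ₀ + ε₀ / 2 * (glueFn s (x - d₀ / 2) + glueFn s (-x - d₀ / 2) - 2)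
        = δ₀ + ε₀ / 2 * (glueFn s (x - d₀ / 2) - 1) + ε₀ / 2 * (glueFn s (-x - d₀ / 2) - 1) := by
      ring
    simp only []
    rw [e]
    have t1 : |ε₀ / 2 * (glueFn s (x - d₀ / 2) - 1)| ≤ |ε₀| / 2 := by
      rw [abs_mul, abs_div, abs_two]
      calc |ε₀| / 2 * |glueFn s (x - d₀ / 2) - 1| ≤ |ε₀| / 2 * 1 := by
            apply mul_le_mul_of_nonneg_left b1 (by positivity)
        _ = |ε₀| / 2 := by ring
    have t2 : |ε₀ / 2 * (glueFn s (-x - d₀ / 2) - 1)| ≤ |ε₀| / 2 := by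
      rw [abs_mul, abs_div, abs_two]
      calc |ε₀| / 2 * |glueFn s (-x - d₀ / 2) - 1| ≤ |ε₀| / 2 * 1 := by
            apply mul_le_mul_of_nonneg_left b2 (by positivity)
        _ = |ε₀| / 2 := by ring
    calc |δ₀ + ε₀ / 2 * (glueFn s (x - d₀ / 2) - 1) + ε₀ / 2 * (glueFn s (-x - d₀ / 2) - 1)|
        ≤ |δ₀ + ε₀ / 2 * (glueFn s (x - d₀ / 2) - 1)| + |ε₀ / 2 * (glueFn s (-x - d₀ / 2) - 1)| :=
          abs_add_le _ _
      _ ≤ (|δ₀| + |ε₀ / 2 * (glueFn s (x - d₀ / 2) - 1)|)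
            + |ε₀ / 2 * (glueFn s (-x - d₀ / 2) - 1)| := by
          exact add_le_add (abs_add_le _ _) le_rfl
      _ ≤ |δ₀| + |ε₀| := by linarith
  · -- ODE on open intervals
    rintro x (hx | ⟨hx1, hx2⟩ | hx)
    · -- x < -d₀/2
      set K := ε₀ / 2 * (Real.exp (d₀ / (2 * s)) - Real.exp (-d₀ / (2 * s))) with hK
      have hev : bumpSol D δ₀ ε₀ d₀ =ᶠ[nhds x] fun y => δ₀ + K * Real.exp (y / s) := by
        filter_upwards [Iio_mem_nhds hx] with y hy
        have hy' : y < -d₀ / 2 := hy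
        simp only [bumpSol, ← hsdef, if_pos hy'.le]
        rw [hK]
      have hd1 : ∀ y : ℝ, HasDerivAt (fun y => δ₀ + K * Real.exp (y / s))
          (K * (1 / s) * Real.exp (y / s)) y := by
        intro y
        have := ((expDiv_hasDerivAt s y).const_mul K).const_add δ₀
        refine this.congr_deriv ?_; ring
      have hder1 : deriv (fun y => δ₀ + K * Real.exp (y / s))
          = fun y => K * (1 / s) * Real.exp (y / s) := funext fun y => (hd1 y).deriv
      have hd2 : HasDerivAt (fun y => K * (1 / s) * Real.exp (y / s))
          (K * (1 / s) * (1 / s) * Real.exp (x / s)) x := by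
        have := (expDiv_hasDerivAt s x).const_mul (K * (1 / s))
        refine this.congr_deriv ?_; ring
      have e1 : deriv (deriv (bumpSol D δ₀ ε₀ d₀)) x
          = K * (1 / s) * (1 / s) * Real.exp (x / s) := by
        rw [(hev.deriv).deriv_eq, hder1, hd2.deriv]
      have e2 : bumpSol D δ₀ ε₀ d₀ x = δ₀ + K * Real.exp (x / s) := hev.eq_of_nhds
      have e3 : bumpDelta δ₀ ε₀ d₀ x = δ₀ := by
        unfold bumpDelta
        rw [if_neg]; rintro ⟨h1, -⟩; linarith
      rw [e1, e2, e3]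
      have key : D * (K * (1 / s) * (1 / s)) = K := by
        rw [← hs2]; field_simp
      linear_combination Real.exp (x / s) * key
    · -- middle
      set C := ε₀ / 2 * Real.exp (-d₀ / (2 * s)) with hC
      have hev : bumpSol D δ₀ ε₀ d₀ =ᶠ[nhds x]
          fun y => δ₀ + ε₀ - C * (Real.exp (y / s) + Real.exp (-y / s)) := by
        filter_upwards [Ioo_mem_nhds hx1 hx2] with y hy
        have hy1' : -d₀ / 2 < y := hy.1
        have hy2' : y < d₀ / 2 := hy.2
        simp only [bumpSol, ← hsdef, if_neg (not_le.mpr hy1'), if_pos hy2'.le]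
        rw [hC]
      have hd1 : ∀ y : ℝ, HasDerivAt
          (fun y => δ₀ + ε₀ - C * (Real.exp (y / s) + Real.exp (-y / s)))
          (-(C * (1 / s)) * (Real.exp (y / s) - Real.exp (-y / s))) y := by
        intro y
        have := (((expDiv_hasDerivAt s y).add (expNegDiv_hasDerivAt s y)).const_mul C).const_sub
          (δ₀ + ε₀)
        refine this.congr_deriv ?_; ring
      have hder1 : deriv (fun y => δ₀ + ε₀ - C * (Real.exp (y / s) + Real.exp (-y / s)))
          = fun y => -(C * (1 / s)) * (Real.exp (y / s) - Real.exp (-y / s)) :=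
        funext fun y => (hd1 y).deriv
      have hd2 : HasDerivAt (fun y => -(C * (1 / s)) * (Real.exp (y / s) - Real.exp (-y / s)))
          (-(C * (1 / s) * (1 / s)) * (Real.exp (x / s) + Real.exp (-x / s))) x := by
        have := ((expDiv_hasDerivAt s x).sub (expNegDiv_hasDerivAt s x)).const_mul
          (-(C * (1 / s)))
        refine this.congr_deriv ?_; ring
      have e1 : deriv (deriv (bumpSol D δ₀ ε₀ d₀)) x
          = -(C * (1 / s) * (1 / s)) * (Real.exp (x / s) + Real.exp (-x / s)) := by
        rw [(hev.deriv).deriv_eq, hder1, hd2.deriv]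
      have e2 : bumpSol D δ₀ ε₀ d₀ x
          = δ₀ + ε₀ - C * (Real.exp (x / s) + Real.exp (-x / s)) := hev.eq_of_nhds
      have e3 : bumpDelta δ₀ ε₀ d₀ x = δ₀ + ε₀ := by
        unfold bumpDelta
        rw [if_pos ⟨hx1.le, hx2.le⟩]
      rw [e1, e2, e3]
      have key : D * (C * (1 / s) * (1 / s)) = C := by
        rw [← hs2]; field_simp
      linear_combination (-(Real.exp (x / s) + Real.exp (-x / s))) * key
    · -- x > d₀/2
      set K := ε₀ / 2 * (Real.exp (d₀ / (2 * s)) - Real.exp (-d₀ / (2 * s))) with hK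
      have hev : bumpSol D δ₀ ε₀ d₀ =ᶠ[nhds x] fun y => δ₀ + K * Real.exp (-y / s) := by
        filter_upwards [Ioi_mem_nhds hx] with y hy
        have hy' : d₀ / 2 < y := hy
        have hy1 : ¬ y ≤ -d₀ / 2 := by push_neg; linarith
        have hy2 : ¬ y ≤ d₀ / 2 := not_le.mpr hy'
        simp only [bumpSol, ← hsdef, if_neg hy1, if_neg hy2]
        rw [hK]
      have hd1 : ∀ y : ℝ, HasDerivAt (fun y => δ₀ + K * Real.exp (-y / s))
          (-(K * (1 / s)) * Real.exp (-y / s)) y := by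
        intro y
        have := ((expNegDiv_hasDerivAt s y).const_mul K).const_add δ₀
        refine this.congr_deriv ?_; ring
      have hder1 : deriv (fun y => δ₀ + K * Real.exp (-y / s))
          = fun y => -(K * (1 / s)) * Real.exp (-y / s) := funext fun y => (hd1 y).deriv
      have hd2 : HasDerivAt (fun y => -(K * (1 / s)) * Real.exp (-y / s))
          (K * (1 / s) * (1 / s) * Real.exp (-x / s)) x := by
        have := (expNegDiv_hasDerivAt s x).const_mul (-(K * (1 / s)))
        refine this.congr_deriv ?_; ring
      have e1 : deriv (deriv (bumpSol D δ₀ ε₀ d₀)) x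
          = K * (1 / s) * (1 / s) * Real.exp (-x / s) := by
        rw [(hev.deriv).deriv_eq, hder1, hd2.deriv]
      have e2 : bumpSol D δ₀ ε₀ d₀ x = δ₀ + K * Real.exp (-x / s) := hev.eq_of_nhds
      have e3 : bumpDelta δ₀ ε₀ d₀ x = δ₀ := by
        unfold bumpDelta
        rw [if_neg]; rintro ⟨-, h2⟩; linarith
      rw [e1, e2, e3]
      have key : D * (K * (1 / s) * (1 / s)) = K := by
        rw [← hs2]; field_simp
      linear_combination Real.exp (-x / s) * key
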